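/- Let t > s > 0 be positive integers, N a positive integer, and s < u ≤ t. Then for every integer ℓ ≥ 0 and every real z, ∫_ℝ κ_{u−s}(z−x) L̃_ℓ^{N(s−1)}(x) w_{N(s−1),1}(x) dx = (r_ℓ^{N(s−1)} / r_ℓ^{N(u−1)}) · L̃_ℓ^{N(u−1)}(z) · w_{N(u−1),1}(z). -/

import Mathlib

open MeasureTheory Set

/-- The gamma weight `w_{a,b}(x) = b^{a+1}/Γ(a+1) · x^a e^{-bx}` for `x > 0`,
and `0` otherwise. -/
noncomputable def w (a b x : ℝ) : ℝ :=
  if 0 < x then b ^ (a + 1) / Real.Gamma (a + 1) * x ^ a * Real.exp (-(b * x)) else 0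

/-- `κ_τ(x) := w_{Nτ-1,1}(x)`. -/
noncomputable def kappa (N : ℕ) (τ : ℝ) (x : ℝ) : ℝ :=
  w ((N : ℝ) * τ - 1) 1 x

/-- The monic Laguerre polynomial with index `a`:
`L̃_n^a(x) = Σ_{k=0}^n (-1)^{n-k} (n!/(n-k)!) (Γ(a+n+1)/Γ(a+k+1)) x^k/k!`. -/
noncomputable def Lag (a : ℝ) (n : ℕ) (x : ℝ) : ℝ :=
  ∑ k ∈ Finset.range (n + 1),
    (-1 : ℝ) ^ (n - k) * ((n.factorial : ℝ) / ((n - k).factorial : ℝ))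
      * (Real.Gamma (a + n + 1) / Real.Gamma (a + k + 1)) * x ^ k / (k.factorial : ℝ)

/-- The squared norm `r_ℓ^a = ℓ! Γ(a+ℓ+1)/Γ(a+1)` of the monic Laguerre
polynomial `L̃_ℓ^a` with respect to the weight `w_{a,1}`. -/
noncomputable def rconst (a : ℝ) (l : ℕ) : ℝ :=
  (l.factorial : ℝ) * Real.Gamma (a + l + 1) / Real.Gamma (a + 1)

lemma beta_real {p q : ℝ} (hp : 0 < p) (hq : 0 < q) {z : ℝ} (hz : 0 < z) :
    ∫ x in (0:ℝ)..z, x ^ (p - 1) * (z - x) ^ (q - 1) =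
      Real.Gamma p * Real.Gamma q / Real.Gamma (p + q) * z ^ (p + q - 1) := by
  have key := Complex.betaIntegral_scaled (p : ℂ) (q : ℂ) hz
  have hB : Complex.betaIntegral p q
      = ((Real.Gamma p * Real.Gamma q / Real.Gamma (p + q) : ℝ) : ℂ) := by
    have h1 := Complex.Gamma_mul_Gamma_eq_betaIntegral
      (s := (p:ℂ)) (t := (q:ℂ)) (by simpa using hp) (by simpa using hq)
    have hpq : Complex.Gamma ((p:ℂ) + q) = ((Real.Gamma (p+q) : ℝ) : ℂ) := by
      rw [← Complex.ofReal_add, Complex.Gamma_ofReal]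
    have hne : ((Real.Gamma (p+q) : ℝ) : ℂ) ≠ 0 := by
      simpa using (Real.Gamma_pos_of_pos (by linarith : (0:ℝ) < p + q)).ne'
    rw [hpq] at h1
    have hne' : Real.Gamma (p + q) ≠ 0 :=
      (Real.Gamma_pos_of_pos (by linarith : (0:ℝ) < p + q)).ne'
    field_simp
    rw [Complex.ofReal_div, Complex.ofReal_mul, ← Complex.Gamma_ofReal p, ← Complex.Gamma_ofReal q, h1,
      mul_div_cancel_left₀ _ hne]
  have hL : (∫ x in (0:ℝ)..z, (x : ℂ) ^ ((p:ℂ) - 1) * ((z : ℂ) - x) ^ ((q:ℂ) - 1))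
      = ((∫ x in (0:ℝ)..z, x ^ (p - 1) * (z - x) ^ (q - 1) : ℝ) : ℂ) := by
    rw [← intervalIntegral.integral_ofReal]
    apply intervalIntegral.integral_congr
    intro x hx
    rw [uIcc_of_le hz.le] at hx
    obtain ⟨hx0, hxz⟩ := hx
    dsimp only
    rw [Complex.ofReal_mul, Complex.ofReal_cpow hx0, Complex.ofReal_cpow (by linarith)]
    push_cast
    ring
  rw [hL, hB] at key
  have hR : ((z:ℂ)) ^ ((p:ℂ) + q - 1) = ((z ^ (p + q - 1) : ℝ) : ℂ) := by
    rw [Complex.ofReal_cpow hz.le]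
    push_cast
    ring
  rw [hR, ← Complex.ofReal_mul, Complex.ofReal_inj] at key
  rw [key]; ring


lemma w_mul_indicator {a c : ℝ} {z : ℝ} (hz : 0 < z) :
    (fun x => w c 1 (z - x) * w a 1 x)
      = Set.indicator (Set.Ioo 0 z)
          (fun x => Real.exp (-z) / (Real.Gamma (c + 1) * Real.Gamma (a + 1))
            * ((z - x) ^ c * x ^ a)) := by
  funext x
  rw [Set.indicator_apply]
  by_cases h1 : x ∈ Set.Ioo 0 z
  · obtain ⟨hx0, hxz⟩ := h1
    rw [if_pos ⟨hx0, hxz⟩, w, w, if_pos hx0, if_pos (by linarith : 0 < z - x)]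
    simp only [Real.one_rpow, one_mul]
    have hE : Real.exp (-(z - x)) * Real.exp (-x) = Real.exp (-z) := by
      rw [← Real.exp_add]; congr 1; ring
    rw [← hE]; ring
  · rw [if_neg h1]
    rw [Set.mem_Ioo, not_and_or] at h1
    rcases h1 with h1 | h1
    · rw [show w a 1 x = 0 from if_neg h1, mul_zero]
    · rw [show w c 1 (z - x) = 0 from if_neg (by push_neg at h1 ⊢; linarith), zero_mul]

lemma w_mul_zero {a c z : ℝ} (hz : ¬ 0 < z) (x : ℝ) : w c 1 (z - x) * w a 1 x = 0 := by
  by_cases hx : 0 < x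
  · rw [show w c 1 (z - x) = 0 from if_neg (by push_neg at hz ⊢; linarith), zero_mul]
  · rw [show w a 1 x = 0 from if_neg hx, mul_zero]

lemma integrableOn_beta {c d z : ℝ} (hc : 0 ≤ c) (hd : 0 ≤ d) (hz : 0 < z) :
    IntegrableOn (fun x => (z - x) ^ c * x ^ d) (Set.Ioo 0 z) := by
  have hcont : Continuous fun x : ℝ => (z - x) ^ c * x ^ d :=
    ((continuous_const.sub continuous_id).rpow_const (fun x => Or.inr hc)).mul
      (continuous_id.rpow_const (fun x => Or.inr hd))
  exact (hcont.integrableOn_Icc).mono_set Set.Ioo_subset_Icc_self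

lemma w_conv_integrable {a c : ℝ} (ha : 0 ≤ a) (hc : 0 ≤ c) (z : ℝ) :
    Integrable (fun x => w c 1 (z - x) * w a 1 x) := by
  by_cases hz : 0 < z
  · rw [w_mul_indicator hz]
    exact MeasureTheory.IntegrableOn.integrable_indicator
      ((integrableOn_beta hc ha hz).const_mul _) measurableSet_Ioo
  · simp only [w_mul_zero hz]
    exact integrable_zero _ _ _

lemma w_conv {a c : ℝ} (ha : 0 ≤ a) (hc : 0 ≤ c) (z : ℝ) :
    ∫ x, w c 1 (z - x) * w a 1 x = w (a + c + 1) 1 z := by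
  by_cases hz : 0 < z
  · rw [w_mul_indicator hz, integral_indicator measurableSet_Ioo,
      ← integral_Ioc_eq_integral_Ioo, ← intervalIntegral.integral_of_le hz.le,
      intervalIntegral.integral_const_mul]
    have hb := beta_real (p := a + 1) (q := c + 1) (by linarith) (by linarith) hz
    simp only [add_sub_cancel_right] at hb
    rw [show (∫ x in (0:ℝ)..z, (z - x) ^ c * x ^ a)
        = ∫ x in (0:ℝ)..z, x ^ a * (z - x) ^ c from by
      apply intervalIntegral.integral_congr; intro x _; dsimp only; ring, hb]
    rw [w, if_pos hz, Real.one_rpow, one_mul]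
    have h1 : (0:ℝ) < Real.Gamma (a + 1) := Real.Gamma_pos_of_pos (by linarith)
    have h2 : (0:ℝ) < Real.Gamma (c + 1) := Real.Gamma_pos_of_pos (by linarith)
    rw [show a + 1 + (c + 1) = a + c + 1 + 1 by ring, show a + c + 1 + 1 - 1 = a + c + 1 by ring]
    have h3 : (0:ℝ) < Real.Gamma (a + c + 1 + 1) := Real.Gamma_pos_of_pos (by linarith)
    field_simp
  · simp only [w_mul_zero hz]
    rw [w, if_neg hz, integral_zero]


lemma pow_mul_w {a : ℝ} (ha : 0 ≤ a) (k : ℕ) (x : ℝ) :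
    x ^ k * w a 1 x = Real.Gamma (a + k + 1) / Real.Gamma (a + 1) * w (a + (k : ℝ)) 1 x := by
  rw [w, w]
  by_cases hx : 0 < x
  · rw [if_pos hx, if_pos hx]
    simp only [Real.one_rpow, one_mul]
    rw [show x ^ (a + (k : ℝ)) = x ^ a * x ^ k from by
      rw [Real.rpow_add hx, Real.rpow_natCast]]
    have h1 : (0:ℝ) < Real.Gamma (a + 1) := Real.Gamma_pos_of_pos (by linarith)
    have h2 : (0:ℝ) < Real.Gamma (a + (k:ℝ) + 1) := Real.Gamma_pos_of_pos
      (by positivity)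
    rw [show a + (k:ℝ) + 1 = a + k + 1 from rfl]
    field_simp
  · rw [if_neg hx, if_neg hx, mul_zero, mul_zero]

lemma conv_mono {a c : ℝ} (ha : 0 ≤ a) (hc : 0 ≤ c) (k : ℕ) (z : ℝ) :
    ∫ x, w c 1 (z - x) * (x ^ k * w a 1 x)
      = Real.Gamma (a + k + 1) / Real.Gamma (a + 1) * w (a + c + 1 + (k : ℝ)) 1 z := by
  have h1 : ∀ x : ℝ, w c 1 (z - x) * (x ^ k * w a 1 x)
      = Real.Gamma (a + k + 1) / Real.Gamma (a + 1) * (w c 1 (z - x) * w (a + (k:ℝ)) 1 x) := by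
    intro x; rw [pow_mul_w ha]; ring
  simp only [h1]
  rw [integral_const_mul, w_conv (by positivity) hc z,
    show a + (k:ℝ) + c + 1 = a + c + 1 + (k:ℝ) by ring]

lemma conv_term_integrable {a c : ℝ} (ha : 0 ≤ a) (hc : 0 ≤ c) (k : ℕ) (z : ℝ) (D : ℝ) :
    Integrable (fun x => D * (w c 1 (z - x) * (x ^ k * w a 1 x))) := by
  have h2 := ((w_conv_integrable (a := a + (k:ℝ)) (by positivity) hc z).const_mul
    (D * (Real.Gamma (a + k + 1) / Real.Gamma (a + 1))))
  apply h2.congr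
  filter_upwards with x
  rw [pow_mul_w ha]; ring

lemma conv_main {a c : ℝ} (ha : 0 ≤ a) (hc : 0 ≤ c) (l : ℕ) (z : ℝ) :
    (∫ x, w c 1 (z - x) * Lag a l x * w a 1 x)
      = rconst a l / rconst (a + c + 1) l * Lag (a + c + 1) l z * w (a + c + 1) 1 z := by
  set b := a + c + 1 with hbdef
  have hb0 : (0:ℝ) ≤ b := by rw [hbdef]; linarith
  have hsum : ∀ x : ℝ, w c 1 (z - x) * Lag a l x * w a 1 x
      = ∑ k ∈ Finset.range (l + 1),
          ((-1 : ℝ) ^ (l - k) * ((l.factorial : ℝ) / ((l - k).factorial : ℝ))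
            * (Real.Gamma (a + l + 1) / Real.Gamma (a + k + 1)) / (k.factorial : ℝ))
          * (w c 1 (z - x) * (x ^ k * w a 1 x)) := by
    intro x
    rw [Lag, Finset.mul_sum, Finset.sum_mul]
    apply Finset.sum_congr rfl
    intro k _
    ring
  simp only [hsum]
  rw [integral_finset_sum _ (fun k _ => conv_term_integrable ha hc k z _)]
  have hstep : ∀ k ∈ Finset.range (l + 1),
      (∫ x, ((-1 : ℝ) ^ (l - k) * ((l.factorial : ℝ) / ((l - k).factorial : ℝ))
            * (Real.Gamma (a + l + 1) / Real.Gamma (a + k + 1)) / (k.factorial : ℝ))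
          * (w c 1 (z - x) * (x ^ k * w a 1 x)))
      = ((-1 : ℝ) ^ (l - k) * ((l.factorial : ℝ) / ((l - k).factorial : ℝ))
            * (Real.Gamma (a + l + 1) / Real.Gamma (a + k + 1)) / (k.factorial : ℝ))
          * (Real.Gamma (a + k + 1) / Real.Gamma (a + 1) * w (b + (k:ℝ)) 1 z) := by
    intro k _
    rw [integral_const_mul, conv_mono ha hc k z]
  rw [Finset.sum_congr rfl hstep]
  -- now express w (b + k) in terms of z^k * w b 1 z
  have hw : ∀ k : ℕ, w (b + (k:ℝ)) 1 z
      = Real.Gamma (b + 1) / Real.Gamma (b + k + 1) * (z ^ k * w b 1 z) := by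
    intro k
    have h1 : (0:ℝ) < Real.Gamma (b + 1) := Real.Gamma_pos_of_pos (by linarith)
    have h2 : (0:ℝ) < Real.Gamma (b + k + 1) := Real.Gamma_pos_of_pos (by positivity)
    rw [pow_mul_w hb0 k z]
    field_simp
  simp only [hw]
  rw [rconst, rconst, Lag, Finset.mul_sum, Finset.sum_mul]
  apply Finset.sum_congr rfl
  intro k hk
  have hΓa1 : (0:ℝ) < Real.Gamma (a + 1) := Real.Gamma_pos_of_pos (by linarith)
  have hΓak : (0:ℝ) < Real.Gamma (a + k + 1) := Real.Gamma_pos_of_pos (by positivity)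
  have hΓb1 : (0:ℝ) < Real.Gamma (b + 1) := Real.Gamma_pos_of_pos (by linarith)
  have hΓbk : (0:ℝ) < Real.Gamma (b + k + 1) := Real.Gamma_pos_of_pos (by positivity)
  have hΓbl : (0:ℝ) < Real.Gamma (b + l + 1) := Real.Gamma_pos_of_pos (by positivity)
  have hkf : ((k.factorial : ℝ)) ≠ 0 := Nat.cast_ne_zero.2 k.factorial_ne_zero
  have hlkf : (((l - k).factorial : ℝ)) ≠ 0 := Nat.cast_ne_zero.2 (l - k).factorial_ne_zero
  have hlf : ((l.factorial : ℝ)) ≠ 0 := Nat.cast_ne_zero.2 l.factorial_ne_zero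
  field_simp

/-- For positive integers `t > s > 0` and `s < u ≤ t`,
`∫ κ_{u-s}(z-x) L̃_ℓ^{N(s-1)}(x) w_{N(s-1),1}(x) dx
  = (r_ℓ^{N(s-1)}/r_ℓ^{N(u-1)}) L̃_ℓ^{N(u-1)}(z) w_{N(u-1),1}(z)`. -/
theorem laguerre_Q_transform (N : ℕ) (hN : 0 < N) (t s u : ℕ) (hs : 0 < s) (hst : s < t)
    (hsu : s < u) (hut : u ≤ t) (l : ℕ) (z : ℝ) :
    (∫ x : ℝ, kappa N ((u : ℝ) - s) (z - x) * Lag ((N : ℝ) * ((s : ℝ) - 1)) l x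
        * w ((N : ℝ) * ((s : ℝ) - 1)) 1 x)
      = rconst ((N : ℝ) * ((s : ℝ) - 1)) l / rconst ((N : ℝ) * ((u : ℝ) - 1)) l
          * Lag ((N : ℝ) * ((u : ℝ) - 1)) l z * w ((N : ℝ) * ((u : ℝ) - 1)) 1 z := by
  have ha : (0:ℝ) ≤ (N:ℝ) * ((s:ℝ) - 1) := by
    have h1 : (1:ℝ) ≤ (s:ℝ) := by exact_mod_cast hs
    have h0 : (0:ℝ) ≤ (N:ℝ) := Nat.cast_nonneg N
    nlinarith
  have hc : (0:ℝ) ≤ (N:ℝ) * ((u:ℝ) - (s:ℝ)) - 1 := by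
    have h1 : (1:ℝ) ≤ (N:ℝ) := by exact_mod_cast hN
    have h2 : (1:ℝ) ≤ (u:ℝ) - (s:ℝ) := by
      have h3 : (s:ℝ) + 1 ≤ (u:ℝ) := by exact_mod_cast Nat.succ_le_of_lt hsu
      linarith
    nlinarith
  have key := conv_main ha hc l z
  have hb : ((N:ℝ) * ((s:ℝ) - 1)) + ((N:ℝ) * ((u:ℝ) - (s:ℝ)) - 1) + 1
      = (N:ℝ) * ((u:ℝ) - 1) := by ring
  rw [hb] at key
  simpa [kappa] using key
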